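/- The quadratic equation λ(a²+ā²)·w² − (1 − (λ̄(ā²+a²) + λaā))·w + λ̄āa = 0 has two distinct roots w and ŵ with 0 < |w| < 1 < |ŵ|; in particular it has exactly one root in the open unit disk and the other root lies strictly outside the closed unit disk. -/

import Mathlib

set_option maxHeartbeats 1000000

open Polynomial in
/-- The limiting quadratic λ(a²+ā²)w² − (1 − (λ̄(ā²+a²)+λaā))w + λ̄āa. -/
noncomputable def wQuad (a lam : ℝ) : Polynomial ℂ :=
  C ((lam:ℂ)*((a:ℂ)^2+(1-(a:ℂ))^2)) * X^2
  - C (1 - ((1-(lam:ℂ))*((1-(a:ℂ))^2+(a:ℂ)^2) + (lam:ℂ)*(a:ℂ)*(1-(a:ℂ)))) * X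
  + C ((1-(lam:ℂ))*(1-(a:ℂ))*(a:ℂ))

open Polynomial in
lemma quad_factor (α z z' : ℂ) :
    C α * X^2 - C (α*(z+z')) * X + C (α*(z*z')) = C α * ((X - C z) * (X - C z')) := by
  simp only [C_mul, C_add]
  ring

theorem stmt10 (a lam : ℝ) (ha : 0 < a) (ha1 : a < 1) (hl : 0 < lam) (hl1 : lam < 1) :
    ∃ w what : ℂ, w ≠ what ∧
      (wQuad a lam).roots = {w, what} ∧
      0 < ‖w‖ ∧ ‖w‖ < 1 ∧ 1 < ‖what‖ ∧
      Multiset.card ((wQuad a lam).roots.filter (fun z => ‖z‖ < 1)) = 1 ∧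
      (∀ z ∈ (wQuad a lam).roots, ¬ ‖z‖ < 1 → 1 < ‖z‖) := by
  set A : ℝ := lam*(a^2+(1-a)^2) with hA
  set B : ℝ := 1 - ((1-lam)*((1-a)^2+a^2) + lam*a*(1-a)) with hB
  set Cc : ℝ := (1-lam)*(1-a)*a with hCc
  have hA0 : 0 < A := by rw [hA]; nlinarith [mul_pos hl (pow_pos ha 2), mul_nonneg hl.le (sq_nonneg (1-a))]
  have hC0 : 0 < Cc := by
    have := mul_pos (mul_pos (by linarith : (0:ℝ) < 1 - lam) (by linarith : (0:ℝ) < 1 - a)) ha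
    simpa [hCc, mul_assoc] using this
  have hB0 : 0 < B := by
    have h1 : a*(1-a) > 0 := mul_pos ha (by linarith)
    have h2 : a*(1-a) ≤ 1/4 := by nlinarith [sq_nonneg (a - 1/2)]
    nlinarith
  have hP1 : A - B + Cc = -(a*(1-a)) := by simp only [hA, hB, hCc]; ring
  set D : ℝ := B^2 - 4*A*Cc with hD
  have hD0 : 0 < D := by nlinarith [sq_nonneg (B - 2*A), mul_pos ha (by linarith : (0:ℝ) < 1-a)]
  set sD : ℝ := Real.sqrt D with hsD
  have hsD2 : sD^2 = D := Real.sq_sqrt hD0.le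
  have hsD0 : 0 < sD := Real.sqrt_pos.mpr hD0
  set w : ℝ := (B - sD)/(2*A) with hw
  set wh : ℝ := (B + sD)/(2*A) with hwh
  have hsum : A*(w+wh) = B := by rw [hw, hwh]; field_simp; ring
  have hprod : A*(w*wh) = Cc := by
    have hne : (2*A) ≠ 0 := by positivity
    rw [hw, hwh]
    field_simp
    nlinarith [hsD2, hD]
  have hw0 : 0 < w := by
    have hBsD : sD < B := by nlinarith [hsD2]
    have : 0 < B - sD := by linarith
    positivity
  have hw1 : w < 1 := by
    rw [hw, div_lt_one (by positivity)]
    nlinarith [hsD2]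
  have hwh1 : 1 < wh := by
    rw [hwh, lt_div_iff₀ (by positivity)]
    nlinarith [hsD2, hsD0, hP1, mul_pos hA0 (mul_pos ha (sub_pos.mpr ha1)), sq_nonneg (sD + (2*A - B))]
  have hne : w ≠ wh := by
    have : w < wh := by
      rw [hw, hwh]
      exact (div_lt_div_iff_of_pos_right (by positivity)).mpr (by linarith)
    exact this.ne
  -- factorization
  have e1 : ((lam:ℂ)*((a:ℂ)^2+(1-(a:ℂ))^2)) = ((A:ℝ):ℂ) := by
    rw [hA]; push_cast; ring
  have e2 : (1 - ((1-(lam:ℂ))*((1-(a:ℂ))^2+(a:ℂ)^2) + (lam:ℂ)*(a:ℂ)*(1-(a:ℂ)))) = ((A:ℝ):ℂ) * (((w:ℝ):ℂ) + ((wh:ℝ):ℂ)) := by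
    have : ((B:ℝ):ℂ) = ((A:ℝ):ℂ) * (((w:ℝ):ℂ) + ((wh:ℝ):ℂ)) := by
      rw [← hsum]; push_cast; ring
    rw [← this, hB]; push_cast; ring
  have e3 : ((1-(lam:ℂ))*(1-(a:ℂ))*(a:ℂ)) = ((A:ℝ):ℂ) * (((w:ℝ):ℂ) * ((wh:ℝ):ℂ)) := by
    have : ((Cc:ℝ):ℂ) = ((A:ℝ):ℂ) * (((w:ℝ):ℂ) * ((wh:ℝ):ℂ)) := by
      rw [← hprod]; push_cast; ring
    rw [← this, hCc]; push_cast; ring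
  have hfac : wQuad a lam = Polynomial.C ((A:ℝ):ℂ) * ((Polynomial.X - Polynomial.C ((w:ℝ):ℂ)) * (Polynomial.X - Polynomial.C ((wh:ℝ):ℂ))) := by
    rw [wQuad, e1, e2, e3, quad_factor]
  have hAne : ((A:ℝ):ℂ) ≠ 0 := by exact_mod_cast hA0.ne'
  have hroots : (wQuad a lam).roots = {((w:ℝ):ℂ), ((wh:ℝ):ℂ)} := by
    rw [hfac, Polynomial.roots_C_mul _ hAne, Polynomial.roots_mul
      (mul_ne_zero (Polynomial.X_sub_C_ne_zero _) (Polynomial.X_sub_C_ne_zero _)),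
      Polynomial.roots_X_sub_C, Polynomial.roots_X_sub_C]
    rfl
  refine ⟨((w:ℝ):ℂ), ((wh:ℝ):ℂ), ?_, hroots, ?_, ?_, ?_, ?_, ?_⟩
  · exact_mod_cast hne
  · simpa [Complex.norm_real, Real.norm_eq_abs, abs_of_pos hw0] using hw0
  · simpa [Complex.norm_real, Real.norm_eq_abs, abs_of_pos hw0] using hw1
  · simpa [Complex.norm_real, Real.norm_eq_abs, abs_of_pos (by linarith : (0:ℝ) < wh)] using hwh1
  · rw [hroots]
    have c1 : ‖((w:ℝ):ℂ)‖ < 1 := by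
      simpa [Complex.norm_real, Real.norm_eq_abs, abs_of_pos hw0] using hw1
    have c2 : ¬ ‖((wh:ℝ):ℂ)‖ < 1 := by
      simp [Complex.norm_real, Real.norm_eq_abs, abs_of_pos (by linarith : (0:ℝ) < wh)]
      linarith
    have c1r : |w| < 1 := by rw [abs_of_pos hw0]; exact hw1
    have c2r : ¬ |wh| < 1 := by rw [abs_of_pos (by linarith : (0:ℝ) < wh)]; linarith
    simp [Multiset.insert_eq_cons, Multiset.filter_cons, Multiset.filter_singleton, c1r, c2r]
  · intro z hz hnz
    rw [hroots] at hz
    simp [Multiset.insert_eq_cons] at hz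
    rcases hz with rfl | rfl
    · exact absurd (by simpa [Complex.norm_real, Real.norm_eq_abs, abs_of_pos hw0] using hw1) hnz
    · simpa [Complex.norm_real, Real.norm_eq_abs, abs_of_pos (by linarith : (0:ℝ) < wh)] using hwh1
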